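/- Let n ≥ 1, let k be an integer with 0 < k < n, and let x ∈ ℝⁿ. For τ > 0, let m(τ) denote the infimum of −xᵀy − τ·H_b(y) over {y ∈ ℝⁿ : 0 < yᵢ < 1, Σᵢ yᵢ = k}. Then m(τ) converges, as τ → 0⁺, to the negative of the sum of the k largest coordinates of x. -/

import Mathlib

open Finset Filter

/-- The binary entropy function `H_b(y) = -∑ i, [y i log (y i) + (1 - y i) log (1 - y i)]`. -/
noncomputable def binEntropy {n : ℕ} (y : Fin n → ℝ) : ℝ :=
  -(∑ i, (y i * Real.log (y i) + (1 - y i) * Real.log (1 - y i)))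

/-- The sum of the `k` largest coordinates of `x ∈ ℝⁿ`: the sum of the first `k` entries
of `x` sorted in descending order. -/
noncomputable def sumTopK {n : ℕ} (x : Fin n → ℝ) (k : ℕ) : ℝ :=
  (((Multiset.ofList (List.ofFn x)).sort (· ≥ ·)).take k).sum

lemma aux_card_filter_lt (n m : ℕ) (hm : m ≤ n) :
    (Finset.filter (fun i : Fin n => i.val < m) Finset.univ).card = m := by
  have h : ∀ a ∈ Finset.range m, a < n := fun a ha => lt_of_lt_of_le (Finset.mem_range.mp ha) hm
  have : Finset.filter (fun i : Fin n => i.val < m) Finset.univ = (Finset.range m).attachFin h := by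
    ext i; simp [Finset.mem_attachFin]
  rw [this, Finset.card_attachFin, Finset.card_range]

lemma aux_ofFn_comp_perm (n : ℕ) (x : Fin n → ℝ) (σ : Equiv.Perm (Fin n)) :
    (↑(List.ofFn (x ∘ σ)) : Multiset ℝ) = ↑(List.ofFn x) := by
  have h0 : ∀ f : Fin n → ℝ, (↑(List.ofFn f) : Multiset ℝ) = Multiset.map f Finset.univ.val := by
    intro f
    rw [List.ofFn_eq_map, Fin.univ_def]
    rfl
  rw [h0, h0, ← Multiset.map_map x σ]
  congr 1
  calc Multiset.map (⇑σ) Finset.univ.val = (Finset.univ.map σ.toEmbedding).val := rfl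
    _ = Finset.univ.val := by rw [Finset.map_univ_equiv]

/-- There is a set of `k` indices realizing the top-`k` sum, with the threshold property. -/
lemma exists_topk (n k : ℕ) (hk : k ≤ n) (x : Fin n → ℝ) :
    ∃ T : Finset (Fin n), T.card = k ∧ (∀ i ∈ T, ∀ j ∉ T, x j ≤ x i) ∧
      ∑ i ∈ T, x i = sumTopK x k := by
  classical
  set σ := Tuple.sort x with hσ
  set g : Fin n → ℝ := x ∘ σ with hgdef
  have hg : Monotone g := Tuple.monotone_sort x
  set l := ((Multiset.ofList (List.ofFn x)).sort (· ≥ ·)) with hl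
  have hsorted₁ : l.Pairwise (· ≥ ·) := Multiset.pairwise_sort _ _
  have hsorted₂ : ((List.ofFn g).reverse).Pairwise (fun a b => a ≥ b) := by
    rw [List.pairwise_reverse]
    exact hg.sortedLE_ofFn.pairwise
  have hperm : l.Perm (List.ofFn g).reverse := by
    rw [← Multiset.coe_eq_coe, Multiset.coe_reverse, hl, Multiset.sort_eq,
      aux_ofFn_comp_perm n x σ]
  have hleq : l = (List.ofFn g).reverse :=
    List.Perm.eq_of_pairwise' hsorted₁ hsorted₂ hperm
  have hlen : (List.ofFn g).length = n := List.length_ofFn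
  set F := Finset.filter (fun j : Fin n => ¬ j.val < n - k) Finset.univ with hF
  have hsum : sumTopK x k = ∑ j ∈ F, g j := by
    have h1 : sumTopK x k = ((List.ofFn g).reverse.take k).sum := by
      rw [sumTopK, ← hl, hleq]
    rw [h1, List.take_reverse, List.sum_reverse, hlen]
    have h2 : ((List.ofFn g).take (n - k)).sum + ((List.ofFn g).drop (n - k)).sum
        = (List.ofFn g).sum := List.sum_take_add_sum_drop _ _
    have h3 : ((List.ofFn g).take (n - k)).sum
        = ∑ j ∈ Finset.filter (fun j : Fin n => j.val < n - k) Finset.univ, g j :=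
      List.sum_take_ofFn g (n - k)
    have h4 : (List.ofFn g).sum = ∑ j, g j := List.sum_ofFn
    have h5 : (∑ j ∈ Finset.filter (fun j : Fin n => j.val < n - k) Finset.univ, g j)
        + ∑ j ∈ F, g j = ∑ j, g j := Finset.sum_filter_add_sum_filter_not _ _ _
    linarith
  have hFcard : F.card = k := by
    rw [hF, Finset.filter_not, Finset.card_sdiff_of_subset (Finset.filter_subset _ _), Finset.card_univ,
      Fintype.card_fin, aux_card_filter_lt n (n - k) (by omega)]
    omega
  refine ⟨F.map σ.toEmbedding, by rw [Finset.card_map]; exact hFcard, ?_, ?_⟩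
  · intro i hi j hj
    obtain ⟨a, ha, rfl⟩ := Finset.mem_map.mp hi
    have haF : ¬ (a : ℕ) < n - k := (Finset.mem_filter.mp ha).2
    have hjF : ¬ (σ.symm j ∈ F) := by
      intro hmem
      exact hj (Finset.mem_map.mpr ⟨σ.symm j, hmem, by simp⟩)
    have hjlt : ((σ.symm j : Fin n) : ℕ) < n - k := by
      by_contra hcon
      exact hjF (Finset.mem_filter.mpr ⟨Finset.mem_univ _, hcon⟩)
    have hle : σ.symm j ≤ a := by
      rw [Fin.le_def]; omega
    have := hg hle
    simpa [hgdef] using this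
  · rw [Finset.sum_map, hsum]
    rfl

lemma binEntropy_eq_sum {n : ℕ} (y : Fin n → ℝ) :
    binEntropy y = ∑ i, Real.binEntropy (y i) := by
  rw [binEntropy, ← Finset.sum_neg_distrib]
  refine Finset.sum_congr rfl fun i _ => ?_
  rw [Real.binEntropy]
  rw [Real.log_inv, Real.log_inv]
  ring

lemma binEntropy_nonneg' {n : ℕ} (y : Fin n → ℝ) (h : ∀ i, y i ∈ Set.Ioo (0:ℝ) 1) :
    0 ≤ binEntropy y := by
  rw [binEntropy_eq_sum]
  exact Finset.sum_nonneg fun i _ => Real.binEntropy_nonneg (h i).1.le (h i).2.le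

lemma binEntropy_le_card {n : ℕ} (y : Fin n → ℝ) :
    binEntropy y ≤ n * Real.log 2 := by
  rw [binEntropy_eq_sum]
  calc ∑ i, Real.binEntropy (y i) ≤ ∑ _i : Fin n, Real.log 2 :=
        Finset.sum_le_sum fun i _ => Real.binEntropy_le_log_two
    _ = n * Real.log 2 := by simp [mul_comm]

/-- For `y ∈ [0,1]^n` with `∑ y = k`, `⟪x,y⟫ ≤ sumTopK x k`. -/
lemma inner_le_sumTopK (n k : ℕ) (hk0 : 0 < k) (hkn : k ≤ n) (x : Fin n → ℝ)
    (y : Fin n → ℝ) (hy : ∀ i, y i ∈ Set.Icc (0:ℝ) 1) (hsum : (∑ i, y i) = k) :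
    ∑ i, x i * y i ≤ sumTopK x k := by
  classical
  obtain ⟨T, hTcard, hthr, hTsum⟩ := exists_topk n k hkn x
  have hTne : T.Nonempty := Finset.card_pos.mp (by rw [hTcard]; exact hk0)
  obtain ⟨i0, hi0T, hi0min⟩ := T.exists_min_image x hTne
  set t := x i0 with ht
  have hsplit : ∑ i, x i * y i = ∑ i ∈ T, x i * y i + ∑ i ∈ Tᶜ, x i * y i :=
    (Finset.sum_add_sum_compl T _).symm
  have h1 : ∑ i ∈ T, x i * y i ≤ ∑ i ∈ T, (x i + t * (y i - 1)) := by
    refine Finset.sum_le_sum fun i hi => ?_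
    have hxy : x i * (y i - 1) ≤ t * (y i - 1) :=
      mul_le_mul_of_nonpos_right (hi0min i hi) (by linarith [(hy i).2])
    nlinarith
  have h2 : ∑ i ∈ Tᶜ, x i * y i ≤ ∑ i ∈ Tᶜ, t * y i := by
    refine Finset.sum_le_sum fun i hi => ?_
    have hxi : x i ≤ t := hthr i0 hi0T i (Finset.mem_compl.mp hi)
    exact mul_le_mul_of_nonneg_right hxi (hy i).1
  have h3 : ∑ i ∈ T, (x i + t * (y i - 1)) = ∑ i ∈ T, x i + t * (∑ i ∈ T, y i - k) := by
    rw [Finset.sum_add_distrib, ← Finset.mul_sum, Finset.sum_sub_distrib, Finset.sum_const,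
      hTcard]
    simp [mul_sub]
  have h4 : ∑ i ∈ Tᶜ, t * y i = t * ∑ i ∈ Tᶜ, y i := by rw [Finset.mul_sum]
  have h5 : ∑ i ∈ T, y i + ∑ i ∈ Tᶜ, y i = k := by
    rw [Finset.sum_add_sum_compl]; exact hsum
  have : ∑ i, x i * y i ≤ ∑ i ∈ T, x i + t * (∑ i ∈ T, y i - k) + t * ∑ i ∈ Tᶜ, y i := by
    rw [hsplit]; linarith
  have ht0 : t * (∑ i ∈ T, y i - k) + t * ∑ i ∈ Tᶜ, y i = 0 := by
    have h6 : (∑ i ∈ T, y i - k) + ∑ i ∈ Tᶜ, y i = 0 := by linarith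
    rw [← mul_add, h6, mul_zero]
  linarith [hTsum]

/-- For `0 < k < n`, `x ∈ ℝⁿ`, and `τ > 0`, let `m(τ)` be the infimum of
`-⟪x,y⟫ - τ·H_b(y)` over `{y : 0 < yᵢ < 1, ∑ᵢ yᵢ = k}`. Then `m(τ)` converges, as
`τ → 0⁺`, to the negative of the sum of the `k` largest coordinates of `x`. -/
theorem lml_optimal_value_tendsto_neg_topk_sum (n k : ℕ) (hn : 1 ≤ n)
    (hk0 : 0 < k) (hkn : k < n) (x : Fin n → ℝ) :
    Tendsto
      (fun τ : ℝ =>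
        sInf ((fun y : Fin n → ℝ => -(∑ i, x i * y i) - τ * binEntropy y) ''
          {y : Fin n → ℝ | (∀ i, y i ∈ Set.Ioo (0 : ℝ) 1) ∧ (∑ i, y i) = k}))
      (nhdsWithin 0 (Set.Ioi 0)) (nhds (-(sumTopK x k))) := by
  classical
  set S := sumTopK x k with hS
  set Y : Set (Fin n → ℝ) :=
    {y : Fin n → ℝ | (∀ i, y i ∈ Set.Ioo (0 : ℝ) 1) ∧ (∑ i, y i) = k} with hY
  set A : ℝ → Set ℝ := fun τ =>
    (fun y : Fin n → ℝ => -(∑ i, x i * y i) - τ * binEntropy y) '' Y with hA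
  have hn0 : (0:ℝ) < n := by exact_mod_cast Nat.pos_of_ne_zero (by omega)
  have hk0' : (0:ℝ) < k := by exact_mod_cast hk0
  have hnk : (0:ℝ) < (n:ℝ) - k := by
    have : (k:ℝ) < n := by exact_mod_cast hkn
    linarith
  -- a feasible point
  have hy0 : (fun _ : Fin n => (k:ℝ)/n) ∈ Y := by
    constructor
    · intro i
      constructor
      · positivity
      · rw [div_lt_one hn0]; exact_mod_cast hkn
    · rw [Finset.sum_const, Finset.card_univ, Fintype.card_fin]
      rw [nsmul_eq_mul]; field_simp
  have hAne : ∀ τ : ℝ, (A τ).Nonempty := fun τ => ⟨_, _, hy0, rfl⟩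
  -- every element is bounded below
  have hmemlb : ∀ τ : ℝ, 0 < τ → ∀ v ∈ A τ, -S - τ * (n * Real.log 2) ≤ v := by
    intro τ hτ v hv
    obtain ⟨y, hyY, rfl⟩ := hv
    have hxy : ∑ i, x i * y i ≤ S :=
      inner_le_sumTopK n k hk0 hkn.le x y
        (fun i => ⟨(hyY.1 i).1.le, (hyY.1 i).2.le⟩) hyY.2
    have hH : binEntropy y ≤ n * Real.log 2 := binEntropy_le_card y
    have : τ * binEntropy y ≤ τ * (n * Real.log 2) :=
      mul_le_mul_of_nonneg_left hH hτ.le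
    simp only []
    linarith
  have hbdd : ∀ τ : ℝ, 0 < τ → BddBelow (A τ) := fun τ hτ =>
    ⟨-S - τ * (n * Real.log 2), fun v hv => hmemlb τ hτ v hv⟩
  -- lower bound on the infimum
  have hlow : ∀ τ ∈ Set.Ioi (0:ℝ), -S - τ * (n * Real.log 2) ≤ sInf (A τ) := fun τ hτ =>
    le_csInf (hAne τ) (hmemlb τ hτ)
  -- upper bound on the infimum
  have hupp : ∀ τ ∈ Set.Ioi (0:ℝ), sInf (A τ) ≤ -S := by
    intro τ hτ
    obtain ⟨T, hTcard, hthr, hTsum⟩ := exists_topk n k hkn.le x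
    set R := ∑ i ∈ Tᶜ, x i with hR
    set C : ℝ := |S| + (k:ℝ)/((n:ℝ)-k) * |R| + 1 with hC
    have hC1 : (1:ℝ) ≤ C := by
      rw [hC]
      have h1 : 0 ≤ |S| := abs_nonneg _
      have h2 : 0 ≤ (k:ℝ)/((n:ℝ)-k) * |R| := by positivity
      linarith
    have hC0 : (0:ℝ) < C := by linarith
    refine le_of_forall_pos_le_add fun ε hε => ?_
    set ε0 : ℝ := min (ε/C) (min (1/2) (((n:ℝ)-k)/(2*k))) with hε0
    have hε00 : 0 < ε0 := by
      apply lt_min (by positivity) (lt_min (by norm_num) (by positivity))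
    have hε0half : ε0 ≤ 1/2 := le_trans (min_le_right _ _) (min_le_left _ _)
    have hε0nk : ε0 ≤ ((n:ℝ)-k)/(2*k) := le_trans (min_le_right _ _) (min_le_right _ _)
    have hε0C : ε0 ≤ ε/C := min_le_left _ _
    set δ : ℝ := ε0 * k / ((n:ℝ) - k) with hδ
    have hδ0 : 0 < δ := by positivity
    have hδhalf : δ ≤ 1/2 := by
      rw [hδ, div_le_iff₀ hnk]
      have := mul_le_mul_of_nonneg_right hε0nk hk0'.le
      calc ε0 * k ≤ ((n:ℝ)-k)/(2*k) * k := this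
        _ = ((n:ℝ)-k)/2 := by field_simp
        _ = 1/2 * ((n:ℝ)-k) := by ring
    set y : Fin n → ℝ := fun i => if i ∈ T then 1 - ε0 else δ with hy
    have hyY : y ∈ Y := by
      constructor
      · intro i
        by_cases hi : i ∈ T <;> simp only [hy, hi, if_true, if_false] <;> constructor
        · linarith
        · linarith
        · exact hδ0
        · linarith
      · have hcompl : Tᶜ.card = n - k := by
          rw [Finset.card_compl, hTcard, Fintype.card_fin]
        have : ∑ i, y i = ∑ i ∈ T, (1 - ε0) + ∑ i ∈ Tᶜ, δ := by
          rw [← Finset.sum_add_sum_compl T]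
          congr 1
          · exact Finset.sum_congr rfl fun i hi => by simp [hy, hi]
          · exact Finset.sum_congr rfl fun i hi => by
              simp [hy, Finset.mem_compl.mp hi]
        rw [this, Finset.sum_const, Finset.sum_const, hTcard, hcompl]
        have hnkcast : ((n - k : ℕ) : ℝ) = (n:ℝ) - k := by
          have := hkn.le
          push_cast [Nat.cast_sub this]
          ring
        rw [nsmul_eq_mul, nsmul_eq_mul, hnkcast, hδ]
        field_simp
        ring
    have hinner : ∑ i, x i * y i = (1 - ε0) * (∑ i ∈ T, x i) + δ * R := by
      rw [← Finset.sum_add_sum_compl T]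
      congr 1
      · rw [Finset.mul_sum]
        exact Finset.sum_congr rfl fun i hi => by simp [hy, hi]; ring
      · rw [hR, Finset.mul_sum]
        exact Finset.sum_congr rfl fun i hi => by
          simp [hy, Finset.mem_compl.mp hi]; ring
    have hval : -(∑ i, x i * y i) - τ * binEntropy y ≤ -S + ε := by
      have hH : 0 ≤ binEntropy y := binEntropy_nonneg' y hyY.1
      have hτH : 0 ≤ τ * binEntropy y := mul_nonneg (le_of_lt hτ) hH
      have h1 : -(∑ i, x i * y i) = -S + ε0 * S - δ * R := by
        rw [hinner, hTsum, ← hS]; ring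
      have h2 : ε0 * S ≤ ε0 * |S| :=
        mul_le_mul_of_nonneg_left (le_abs_self S) hε00.le
      have h3 : -(δ * R) ≤ δ * |R| := by
        have := neg_abs_le R
        nlinarith [hδ0.le, abs_nonneg R]
      have h4 : δ * |R| = ε0 * ((k:ℝ)/((n:ℝ)-k) * |R|) := by
        rw [hδ]; field_simp
      have h5 : ε0 * |S| + δ * |R| ≤ ε0 * C := by
        rw [h4, hC]; nlinarith [hε00.le]
      have h6 : ε0 * C ≤ ε := by
        calc ε0 * C ≤ (ε/C) * C := mul_le_mul_of_nonneg_right hε0C hC0.le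
          _ = ε := by field_simp
      linarith
    calc sInf (A τ) ≤ -(∑ i, x i * y i) - τ * binEntropy y :=
          csInf_le (hbdd τ hτ) ⟨y, hyY, rfl⟩
      _ ≤ -S + ε := hval
  -- squeeze
  have hg : Tendsto (fun τ : ℝ => -S - τ * (n * Real.log 2)) (nhdsWithin 0 (Set.Ioi 0))
      (nhds (-S)) := by
    have h : Tendsto (fun τ : ℝ => -S - τ * (n * Real.log 2)) (nhds 0)
        (nhds (-S - 0 * (n * Real.log 2))) :=
      tendsto_const_nhds.sub (Filter.Tendsto.mul (f := fun τ : ℝ => τ) tendsto_id tendsto_const_nhds)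
    have h2 : -S - 0 * ((n:ℝ) * Real.log 2) = -S := by ring
    rw [h2] at h
    exact h.mono_left nhdsWithin_le_nhds
  refine tendsto_of_tendsto_of_tendsto_of_le_of_le' hg tendsto_const_nhds ?_ ?_
  · exact eventually_nhdsWithin_of_forall hlow
  · exact eventually_nhdsWithin_of_forall hupp
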